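/- arXiv:1902.07024 — 2 statements merged into one kernel-verified Lean document; each statement's English description precedes it below -/
import Mathlib

section
/- Let A ∈ C^{n×n×p} and let f be defined on the spectrum of bcirc(A). Then the T-function commutes with A: f(A) * A = A * f(A); it respects conjugate transposition: f(A^H) = f(A)^H (for f with suitable conjugate-symmetry, e.g. f a polynomial with real coefficients); and it respects similarity: f(X * A * X^{-1}) = X * f(A) * X^{-1} for any invertible tensor X ∈ C^{n×n×p}. -/
open Matrix Kronecker Complex Polynomial

noncomputable section

/-- Block circulant matrix of a third-order tensor given by its frontal slices. -/
def bcirc {m n p : ℕ} (A : Fin p → Matrix (Fin m) (Fin n) ℂ) :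
    Matrix (Fin p × Fin m) (Fin p × Fin n) ℂ :=
  Matrix.of fun jr kc => A (jr.1 - kc.1) jr.2 kc.2

/-- The tensor T-product. -/
def tmul {m n s p : ℕ} (A : Fin p → Matrix (Fin m) (Fin n) ℂ)
    (B : Fin p → Matrix (Fin n) (Fin s) ℂ) : Fin p → Matrix (Fin m) (Fin s) ℂ :=
  fun i => ∑ j : Fin p, A (i - j) * B j

/-- The identity tensor. -/
def tId {n p : ℕ} [NeZero p] : Fin p → Matrix (Fin n) (Fin n) ℂ :=
  fun i => if i = 0 then 1 else 0

/-- T-product powers of a tensor. -/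
def tpow {n p : ℕ} [NeZero p] (A : Fin p → Matrix (Fin n) (Fin n) ℂ) : ℕ → Fin p → Matrix (Fin n) (Fin n) ℂ
  | 0 => tId
  | k + 1 => tmul (tpow A k) A

/-- Conjugate transpose of a tensor. -/
def tconjT {m n p : ℕ} [NeZero p] (A : Fin p → Matrix (Fin m) (Fin n) ℂ) :
    Fin p → Matrix (Fin n) (Fin m) ℂ :=
  fun i => (A (-i))ᴴ

/-- Invertibility with respect to the T-product. -/
def TInvertible {n p : ℕ} [NeZero p] (A : Fin p → Matrix (Fin n) (Fin n) ℂ) : Prop :=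
  ∃ B, tmul A B = tId ∧ tmul B A = tId

/-- `fold` of an `np × n` matrix back into a tensor (first block column). -/
def tfold {n p : ℕ} [NeZero p] (M : Matrix (Fin p × Fin n) (Fin p × Fin n) ℂ) :
    Fin p → Matrix (Fin n) (Fin n) ℂ :=
  fun i => Matrix.of fun r c => M (i, r) ((0 : Fin p), c)

/-- The primitive root ω = e^{-2πi/p}. -/
def tomega (p : ℕ) : ℂ := Complex.exp (-2 * Real.pi * Complex.I / p)

/-- The (unitary) discrete Fourier matrix. -/
def fourierMat (p : ℕ) : Matrix (Fin p) (Fin p) ℂ :=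
  Matrix.of fun j k => tomega p ^ ((j : ℕ) * (k : ℕ)) / Real.sqrt p

/-- Block diagonal matrix with `p` diagonal blocks of size `n × n`. -/
def bdiag {n p : ℕ} (B : Fin p → Matrix (Fin n) (Fin n) ℂ) :
    Matrix (Fin p × Fin n) (Fin p × Fin n) ℂ :=
  Matrix.of fun jr kc => if jr.1 = kc.1 then B jr.1 jr.2 kc.2 else 0


/-- The tensor T-function induced by a scalar polynomial (by Hermite interpolation,
a function defined on the spectrum of `bcirc A` acts as a polynomial):
`f(A) = fold (f(bcirc A) · Ê₁)`. -/
def tfun {n p : ℕ} [NeZero p] (q : Polynomial ℂ)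
    (A : Fin p → Matrix (Fin n) (Fin n) ℂ) : Fin p → Matrix (Fin n) (Fin n) ℂ :=
  tfold (Polynomial.aeval (bcirc A) q)

lemma tfold_bcirc {n p : ℕ} [NeZero p] (A : Fin p → Matrix (Fin n) (Fin n) ℂ) :
    tfold (bcirc A) = A := by
  funext i
  ext r c
  simp [tfold, bcirc]

lemma tmul_eq_tfold {n p : ℕ} [NeZero p] (A B : Fin p → Matrix (Fin n) (Fin n) ℂ) :
    tmul A B = tfold (bcirc A * bcirc B) := by
  funext i
  ext r c
  simp [tmul, tfold, bcirc, Matrix.mul_apply, Matrix.sum_apply, Fintype.sum_prod_type]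

lemma bcirc_tmul {n p : ℕ} [NeZero p] (A B : Fin p → Matrix (Fin n) (Fin n) ℂ) :
    bcirc (tmul A B) = bcirc A * bcirc B := by
  ext ⟨i, r⟩ ⟨k, c⟩
  simp only [bcirc, tmul, Matrix.mul_apply, Matrix.of_apply, Matrix.sum_apply,
    Fintype.sum_prod_type]
  refine Fintype.sum_equiv (Equiv.addRight k) _ _ fun j => ?_
  simp only [Equiv.coe_addRight, add_sub_cancel_right, sub_sub, add_comm k j]

lemma bcirc_tId {n p : ℕ} [NeZero p] : bcirc (tId : Fin p → Matrix (Fin n) (Fin n) ℂ) = 1 := by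
  ext ⟨i, r⟩ ⟨k, c⟩
  simp only [bcirc, tId, Matrix.of_apply, Matrix.one_apply, Prod.mk.injEq, sub_eq_zero]
  by_cases h : i = k <;> by_cases h' : r = c <;> simp [h, h', Matrix.one_apply]

lemma bcirc_tconjT {n p : ℕ} [NeZero p] (A : Fin p → Matrix (Fin n) (Fin n) ℂ) :
    bcirc (tconjT A) = (bcirc A)ᴴ := by
  ext ⟨i, r⟩ ⟨k, c⟩
  simp only [bcirc, tconjT, Matrix.of_apply, Matrix.conjTranspose_apply]
  congr 2
  abel

lemma bcirc_add {n p : ℕ} (A B : Fin p → Matrix (Fin n) (Fin n) ℂ) :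
    bcirc (A + B) = bcirc A + bcirc B := by
  ext ⟨i, r⟩ ⟨k, c⟩
  simp [bcirc]

lemma bcirc_smul {n p : ℕ} (a : ℂ) (A : Fin p → Matrix (Fin n) (Fin n) ℂ) :
    bcirc (a • A) = a • bcirc A := by
  ext ⟨i, r⟩ ⟨k, c⟩
  simp [bcirc]

lemma exists_bcirc_aeval {n p : ℕ} [NeZero p] (A : Fin p → Matrix (Fin n) (Fin n) ℂ)
    (q : Polynomial ℂ) : ∃ B, Polynomial.aeval (bcirc A) q = bcirc B := by
  induction q using Polynomial.induction_on with
  | C a =>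
      refine ⟨a • tId, ?_⟩
      rw [bcirc_smul, bcirc_tId]
      simp [Algebra.algebraMap_eq_smul_one]
  | add q₁ q₂ h₁ h₂ =>
      obtain ⟨B₁, hB₁⟩ := h₁
      obtain ⟨B₂, hB₂⟩ := h₂
      exact ⟨B₁ + B₂, by rw [map_add, hB₁, hB₂, bcirc_add]⟩
  | monomial k a h =>
      obtain ⟨B, hB⟩ := h
      refine ⟨tmul B A, ?_⟩
      have : Polynomial.C a * Polynomial.X ^ (k + 1)
          = (Polynomial.C a * Polynomial.X ^ k) * Polynomial.X := by ring
      rw [this, _root_.map_mul, hB, Polynomial.aeval_X, bcirc_tmul]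

lemma bcirc_tfun {n p : ℕ} [NeZero p] (A : Fin p → Matrix (Fin n) (Fin n) ℂ)
    (q : Polynomial ℂ) : bcirc (tfun q A) = Polynomial.aeval (bcirc A) q := by
  obtain ⟨B, hB⟩ := exists_bcirc_aeval A q
  rw [tfun, hB, tfold_bcirc]

lemma conjTranspose_aeval_real {N : Type*} [Fintype N] [DecidableEq N]
    (M : Matrix N N ℂ) (q₀ : Polynomial ℝ) :
    (Polynomial.aeval M (q₀.map (algebraMap ℝ ℂ)))ᴴ
      = Polynomial.aeval Mᴴ (q₀.map (algebraMap ℝ ℂ)) := by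
  induction q₀ using Polynomial.induction_on' with
  | add q₁ q₂ h₁ h₂ =>
      rw [Polynomial.map_add, map_add, map_add, Matrix.conjTranspose_add, h₁, h₂]
  | monomial k a =>
      rw [Polynomial.map_monomial, Polynomial.aeval_monomial, Polynomial.aeval_monomial]
      simp [Matrix.conjTranspose_mul, Algebra.algebraMap_eq_smul_one, Matrix.conjTranspose_pow,
        Complex.conj_ofReal, Matrix.smul_mul, Matrix.mul_smul]

lemma tconj_pow {N : Type*} [Fintype N] [DecidableEq N] (U V M : Matrix N N ℂ)
    (hUV : U * V = 1) (hVU : V * U = 1) (k : ℕ) :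
    (U * M * V) ^ k = U * M ^ k * V := by
  induction k with
  | zero => simp [hUV]
  | succ k ih =>
      rw [pow_succ, ih, pow_succ]
      have h : U * M ^ k * V * (U * M * V) = U * M ^ k * ((V * U) * (M * V)) := by
        simp only [mul_assoc]
      rw [h, hVU, one_mul, ← mul_assoc, ← mul_assoc]

lemma aeval_conj {N : Type*} [Fintype N] [DecidableEq N] (U V M : Matrix N N ℂ)
    (hUV : U * V = 1) (hVU : V * U = 1) (q : Polynomial ℂ) :
    Polynomial.aeval (U * M * V) q = U * Polynomial.aeval M q * V := by
  induction q using Polynomial.induction_on' with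
  | add q₁ q₂ h₁ h₂ =>
      rw [map_add, map_add, h₁, h₂, Matrix.mul_add, Matrix.add_mul]
  | monomial k a =>
      rw [Polynomial.aeval_monomial, Polynomial.aeval_monomial, tconj_pow U V M hUV hVU,
        Algebra.algebraMap_eq_smul_one]
      simp [Matrix.smul_mul, Matrix.mul_smul, mul_assoc]

/-- the T-function commutes with `A`, respects conjugate
transposition (for real-coefficient polynomials), and respects T-similarity. -/
theorem tfun_commute_conjTranspose_similarity {n p : ℕ} [NeZero p]
    (A : Fin p → Matrix (Fin n) (Fin n) ℂ) (q : Polynomial ℂ) :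
    tmul (tfun q A) A = tmul A (tfun q A) ∧
      (∀ q₀ : Polynomial ℝ,
        tfun (q₀.map (algebraMap ℝ ℂ)) (tconjT A) =
          tconjT (tfun (q₀.map (algebraMap ℝ ℂ)) A)) ∧
      (∀ X Y : Fin p → Matrix (Fin n) (Fin n) ℂ,
        tmul X Y = tId → tmul Y X = tId →
        tfun q (tmul (tmul X A) Y) = tmul (tmul X (tfun q A)) Y) := by
  refine ⟨?_, ?_, ?_⟩
  · -- commutation
    rw [tmul_eq_tfold, tmul_eq_tfold, bcirc_tfun]
    have h2 : Polynomial.aeval (bcirc A) q * bcirc A = bcirc A * Polynomial.aeval (bcirc A) q := by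
      have h1 : Polynomial.aeval (bcirc A) (q * Polynomial.X)
          = Polynomial.aeval (bcirc A) (Polynomial.X * q) := by rw [mul_comm]
      simpa [_root_.map_mul] using h1
    rw [h2]
  · -- conjugate transpose
    intro q₀
    have key : bcirc (tconjT (tfun (q₀.map (algebraMap ℝ ℂ)) A))
        = bcirc (tfun (q₀.map (algebraMap ℝ ℂ)) (tconjT A)) := by
      rw [bcirc_tconjT, bcirc_tfun, bcirc_tfun, bcirc_tconjT, conjTranspose_aeval_real]
    have := congrArg tfold key
    rwa [tfold_bcirc, tfold_bcirc, eq_comm] at this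
  · -- similarity
    intro X Y hXY hYX
    have hbXY : bcirc X * bcirc Y = 1 := by rw [← bcirc_tmul, hXY, bcirc_tId]
    have hbYX : bcirc Y * bcirc X = 1 := by rw [← bcirc_tmul, hYX, bcirc_tId]
    rw [tfun, bcirc_tmul, bcirc_tmul, aeval_conj _ _ _ hbXY hbYX,
      tmul_eq_tfold, bcirc_tmul, bcirc_tfun]

end
end

section
/- (Cayley–Hamilton for the T-product) Let A ∈ C^{n×n×p} with Fourier block diagonalization bcirc(A) = (F_p^H ⊗ I_n) diag(D₁,...,D_p)(F_p ⊗ I_n), and let P_T(x) := lcm(P_{D₁}(x),...,P_{D_p}(x)) be the T-characteristic polynomial, where P_{Dᵢ} is the characteristic polynomial of Dᵢ. Then P_T(A) = O, where P_T is applied to A as a tensor polynomial in the T-product. -/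
open Matrix Kronecker Complex Polynomial

noncomputable section

lemma tomega_isPrimitiveRoot (p : ℕ) [NeZero p] : IsPrimitiveRoot (tomega p) p := by
  have h := Complex.isPrimitiveRoot_exp p (NeZero.ne p)
  have he : tomega p = (Complex.exp (2 * Real.pi * Complex.I / p))⁻¹ := by
    rw [tomega, ← Complex.exp_neg]
    ring_nf
  rw [he]
  exact h.inv

lemma tomega_conj (p : ℕ) : (starRingEnd ℂ) (tomega p) = (tomega p)⁻¹ := by
  rw [tomega, ← Complex.exp_conj, ← Complex.exp_neg]
  congr 1
  simp [map_div₀, map_ofNat]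
  ring

lemma fourier_mul_conjTranspose (p : ℕ) [NeZero p] :
    fourierMat p * (fourierMat p)ᴴ = 1 := by
  have hp0 : (0:ℝ) < p := Nat.cast_pos.mpr (Nat.pos_of_ne_zero (NeZero.ne p))
  have hpC : ((p:ℕ):ℂ) ≠ 0 := Nat.cast_ne_zero.mpr (NeZero.ne p)
  have hζ := tomega_isPrimitiveRoot p
  have hζ0 : tomega p ≠ 0 := hζ.ne_zero (NeZero.ne p)
  ext j k
  rw [Matrix.mul_apply]
  have hterm : ∀ l : Fin p,
      fourierMat p j l * (fourierMat p)ᴴ l k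
        = (tomega p ^ (j:ℕ) * (tomega p ^ (k:ℕ))⁻¹) ^ (l:ℕ) / p := by
    intro l
    have hs : ((Real.sqrt p : ℂ)) * ((Real.sqrt p : ℂ)) = ((p:ℕ):ℂ) := by
      rw [← Complex.ofReal_mul, Real.mul_self_sqrt hp0.le, Complex.ofReal_natCast]
    simp only [fourierMat, Matrix.conjTranspose_apply, Matrix.of_apply, star_div₀,
      star_pow, Complex.star_def, tomega_conj, Complex.conj_ofReal]
    rw [div_mul_div_comm, hs, mul_pow, inv_pow, inv_pow, pow_mul, pow_mul]
  rw [Finset.sum_congr rfl (fun l _ => hterm l), ← Finset.sum_div]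
  set x := tomega p ^ (j:ℕ) * (tomega p ^ (k:ℕ))⁻¹ with hx
  by_cases hjk : j = k
  · subst hjk
    have hx1 : x = 1 := mul_inv_cancel₀ (pow_ne_zero _ hζ0)
    rw [hx1]
    simp only [one_pow, Finset.sum_const, Finset.card_univ, Fintype.card_fin,
      nsmul_eq_mul, mul_one]
    rw [Matrix.one_apply_eq]
    exact div_self hpC
  · have hxne : x ≠ 1 := by
      intro hx1
      apply hjk
      have : tomega p ^ (j:ℕ) = tomega p ^ (k:ℕ) := by
        field_simp [hx] at hx1
        rw [hx] at hx1
        exact (mul_inv_eq_one₀ (pow_ne_zero _ hζ0)).mp hx1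
      exact Fin.ext (hζ.pow_inj j.isLt k.isLt this)
    have hxp : x ^ p = 1 := by
      rw [hx, mul_pow, ← pow_mul, inv_pow, ← pow_mul, mul_comm (j:ℕ) p,
        mul_comm (k:ℕ) p, pow_mul, pow_mul, hζ.pow_eq_one, one_pow, one_pow, inv_one, mul_one]
    have hsum : ∑ l : Fin p, x ^ (l:ℕ) = 0 := by
      rw [Fin.sum_univ_eq_sum_range (fun l => x ^ l), geom_sum_eq hxne, hxp,
        sub_self, zero_div]
    rw [hsum, zero_div, Matrix.one_apply_ne hjk]

lemma fourier_conjTranspose_mul (p : ℕ) [NeZero p] :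
    (fourierMat p)ᴴ * fourierMat p = 1 :=
  mul_eq_one_comm.mp (fourier_mul_conjTranspose p)

/-- `bdiag` as an algebra homomorphism. -/
def bdiagAlgHom (n p : ℕ) :
    (Fin p → Matrix (Fin n) (Fin n) ℂ) →ₐ[ℂ] Matrix (Fin p × Fin n) (Fin p × Fin n) ℂ where
  toFun := bdiag
  map_one' := by
    ext ⟨j, r⟩ ⟨k, c⟩
    simp only [bdiag, Matrix.of_apply, Pi.one_apply, Matrix.one_apply, Prod.mk.injEq]
    by_cases hjk : j = k <;> simp [hjk]
  map_mul' := fun B C => by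
    ext ⟨j, r⟩ ⟨k, c⟩
    simp only [bdiag, Matrix.of_apply, Pi.mul_apply, Matrix.mul_apply,
      Fintype.sum_prod_type]
    by_cases hjk : j = k
    · subst hjk
      rw [Finset.sum_eq_single j]
      · simp
      · intro l _ hl
        simp [Ne.symm hl]
      · simp
    · rw [if_neg hjk, Finset.sum_eq_zero]
      intro l _
      by_cases hjl : j = l
      · subst hjl
        simp [hjk]
      · simp [hjl]
  map_zero' := by
    ext ⟨j, r⟩ ⟨k, c⟩
    simp [bdiag]
  map_add' := fun B C => by
    ext ⟨j, r⟩ ⟨k, c⟩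
    simp only [bdiag, Matrix.of_apply, Pi.add_apply, Matrix.add_apply]
    by_cases hjk : j = k <;> simp [hjk]
  commutes' := fun c => by
    ext ⟨j, r⟩ ⟨k, cc⟩
    simp only [bdiag, Matrix.of_apply, Pi.algebraMap_apply,
      Matrix.algebraMap_matrix_apply, Prod.mk.injEq]
    by_cases hjk : j = k <;> by_cases hrc : r = cc <;> simp [hjk, hrc]

lemma aeval_conj_s15 {R : Type*} [CommRing R] {m : Type*} [Fintype m] [DecidableEq m]
    (P Q B : Matrix m m R) (hQP : Q * P = 1) (hPQ : P * Q = 1) (q : Polynomial R) :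
    Polynomial.aeval (P * B * Q) q = P * Polynomial.aeval B q * Q := by
  let φ : Matrix m m R →ₐ[R] Matrix m m R :=
    { toFun := fun X => P * X * Q
      map_one' := by show P * 1 * Q = 1; rw [Matrix.mul_one, hPQ]
      map_mul' := fun X Y => by
        show P * (X * Y) * Q = P * X * Q * (P * Y * Q)
        calc P * (X * Y) * Q = P * X * (Q * P) * Y * Q := by
              rw [hQP, Matrix.mul_one, Matrix.mul_assoc P X Y]
          _ = P * X * Q * (P * Y * Q) := by
              simp only [Matrix.mul_assoc]
      map_zero' := by show P * 0 * Q = 0; rw [Matrix.mul_zero, Matrix.zero_mul]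
      map_add' := fun X Y => by
        show P * (X + Y) * Q = P * X * Q + P * Y * Q
        rw [Matrix.mul_add, Matrix.add_mul]
      commutes' := fun c => by
        show P * algebraMap R (Matrix m m R) c * Q = algebraMap R (Matrix m m R) c
        rw [Algebra.algebraMap_eq_smul_one, mul_smul_comm, Matrix.mul_one,
          smul_mul_assoc, hPQ] }
  exact (Polynomial.aeval_algHom_apply φ B q)

/-- Cayley–Hamilton for the T-product: the T-characteristic
polynomial, the lcm of the characteristic polynomials of the Fourier diagonal
blocks, annihilates `A`. -/
theorem t_cayley_hamilton {n p : ℕ} [NeZero p]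
    (A D : Fin p → Matrix (Fin n) (Fin n) ℂ)
    (h : bcirc A = ((fourierMat p)ᴴ ⊗ₖ (1 : Matrix (Fin n) (Fin n) ℂ)) * bdiag D *
        (fourierMat p ⊗ₖ (1 : Matrix (Fin n) (Fin n) ℂ))) :
    tfun (Finset.univ.lcm fun i => (D i).charpoly) A = 0 := by
  set q := Finset.univ.lcm fun i => (D i).charpoly with hq
  have hD : Polynomial.aeval D q = 0 := by
    funext i
    have hdvd : (D i).charpoly ∣ q := Finset.dvd_lcm (Finset.mem_univ i)
    obtain ⟨r, hr⟩ := hdvd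
    have : Polynomial.aeval (D i) q = 0 := by
      rw [hr, _root_.map_mul, Matrix.aeval_self_charpoly, zero_mul]
    calc (Polynomial.aeval D q) i
        = Polynomial.aeval (D i) q := (Polynomial.aeval_algHom_apply
            (Pi.evalAlgHom ℂ (fun _ => Matrix (Fin n) (Fin n) ℂ) i) D q).symm
      _ = 0 := this
  have hBD : Polynomial.aeval (bdiag D) q = 0 := by
    have : bdiag D = bdiagAlgHom n p D := rfl
    rw [this, Polynomial.aeval_algHom_apply, hD, map_zero]
  have hQP : (fourierMat p ⊗ₖ (1 : Matrix (Fin n) (Fin n) ℂ)) *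
      ((fourierMat p)ᴴ ⊗ₖ (1 : Matrix (Fin n) (Fin n) ℂ)) = 1 := by
    rw [← Matrix.mul_kronecker_mul, fourier_mul_conjTranspose, Matrix.one_mul,
      Matrix.one_kronecker_one]
  have hPQ : ((fourierMat p)ᴴ ⊗ₖ (1 : Matrix (Fin n) (Fin n) ℂ)) *
      (fourierMat p ⊗ₖ (1 : Matrix (Fin n) (Fin n) ℂ)) = 1 := by
    rw [← Matrix.mul_kronecker_mul, fourier_conjTranspose_mul, Matrix.one_mul,
      Matrix.one_kronecker_one]
  have haev : Polynomial.aeval (bcirc A) q = 0 := by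
    rw [h, aeval_conj_s15 _ _ _ hQP hPQ, hBD, Matrix.mul_zero, Matrix.zero_mul]
  show tfold (Polynomial.aeval (bcirc A) q) = 0
  rw [haev]
  funext i
  ext r c
  simp [tfold]

end
end
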